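/- As |x| → ∞, the Whitham kernel satisfies K(x) = (√2/(π√|x|)) exp(-π|x|/2) + O(|x|^{-3/2} exp(-π|x|/2)). -/

import Mathlib

open Real MeasureTheory Set Filter intervalIntegral

namespace WhithamAux

lemma growth {t : ℝ} (ht : 1 ≤ t) : t * Real.sqrt t ≤ 7 * Real.exp (π/4 * t) := by
  have ht0 : (0:ℝ) < t := by linarith
  have h1 : Real.sqrt t ≤ t := by
    nlinarith [Real.sq_sqrt ht0.le, Real.sqrt_nonneg t, Real.sqrt_le_sqrt (by nlinarith : t ≤ t^2),
      Real.sqrt_sq ht0.le]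
  have h2 : t ≤ (8/π) * Real.exp (π/8*t) := by
    have h0 := Real.add_one_le_exp (π/8*t)
    have hπ : (0:ℝ) < π := Real.pi_pos
    rw [div_mul_eq_mul_div, le_div_iff₀ hπ]
    nlinarith
  have hπ2 : π^2 > 9.85 := by nlinarith [Real.pi_gt_d6]
  have hπ : (0:ℝ) < π := Real.pi_pos
  have hexp : Real.exp (π/8*t) * Real.exp (π/8*t) = Real.exp (π/4*t) := by
    rw [← Real.exp_add]; ring_nf
  have he : 0 < Real.exp (π/8*t) := Real.exp_pos _
  calc t * Real.sqrt t ≤ t * t := by nlinarith [Real.sqrt_nonneg t]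
    _ ≤ ((8/π) * Real.exp (π/8*t)) * ((8/π) * Real.exp (π/8*t)) := by nlinarith
    _ = (64/π^2) * Real.exp (π/4*t) := by rw [← hexp]; ring
    _ ≤ 7 * Real.exp (π/4*t) := by
        have : (64/π^2) ≤ 7 := by rw [div_le_iff₀ (by positivity)]; nlinarith
        nlinarith

lemma exp_decay {t : ℝ} (ht : 1 ≤ t) :
    Real.exp (-(3*π/4) * t) ≤ 7 * (Real.exp (-(π/2)*t) / (t * Real.sqrt t)) := by
  have ht0 : (0:ℝ) < t := by linarith
  have hts : 0 < t * Real.sqrt t := by positivity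
  have h := growth ht
  have key : Real.exp (-(3*π/4)*t) * (t * Real.sqrt t) ≤ 7 * Real.exp (-(π/2)*t) := by
    calc Real.exp (-(3*π/4)*t) * (t * Real.sqrt t) ≤ Real.exp (-(3*π/4)*t) * (7 * Real.exp (π/4*t)) := by
          have := Real.exp_pos (-(3*π/4)*t); nlinarith
      _ = 7 * Real.exp (-(3*π/4)*t + π/4*t) := by rw [Real.exp_add]; ring
      _ = 7 * Real.exp (-(π/2)*t) := by ring_nf
  rw [← mul_div_assoc, le_div_iff₀ hts]
  exact key

lemma sqrt_diff_le {a b : ℝ} (ha : 0 ≤ a) (hb : 0 < b) :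
    |Real.sqrt a - Real.sqrt b| ≤ |a - b| / Real.sqrt b := by
  have hsb : 0 < Real.sqrt b := Real.sqrt_pos.2 hb
  have hsum : 0 < Real.sqrt a + Real.sqrt b := by positivity
  have key : (Real.sqrt a - Real.sqrt b) * (Real.sqrt a + Real.sqrt b) = a - b := by
    have := Real.sq_sqrt ha; have := Real.sq_sqrt hb.le; nlinarith
  have habs : |Real.sqrt a - Real.sqrt b| = |a - b| / (Real.sqrt a + Real.sqrt b) := by
    rw [eq_div_iff hsum.ne', ← abs_of_pos hsum, ← abs_mul, key]
  rw [habs]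
  exact div_le_div_of_nonneg_left (abs_nonneg _) hsb (by linarith [Real.sqrt_nonneg a])

lemma cos_shift (n : ℕ) (u : ℝ) :
    Real.cos ((2*(n:ℝ)+1)*π/2 + u) = (-1)^n * (-Real.sin u) := by
  have h : (2*(n:ℝ)+1)*π/2 + u = (n:ℝ)*π - (-(u + π/2)) := by ring
  rw [h, Real.cos_nat_mul_pi_sub, Real.cos_neg, Real.cos_add_pi_div_two]

lemma abs_cos_shift (n : ℕ) {u : ℝ} (hu : 0 ≤ u) (hu2 : u ≤ π) :
    |Real.cos ((2*(n:ℝ)+1)*π/2 + u)| = Real.sin u := by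
  rw [cos_shift, abs_mul, abs_neg, abs_pow, abs_neg, abs_one, one_pow, one_mul,
    abs_of_nonneg (Real.sin_nonneg_of_nonneg_of_le_pi hu hu2)]


lemma tan_at_odd (n : ℕ) : Real.tan ((2*(n:ℝ)+1)*π/2) = 0 := by
  rw [Real.tan_eq_sin_div_cos]
  have h : Real.cos ((2*(n:ℝ)+1)*π/2) = 0 := by
    have := cos_shift n 0
    simpa using this
  rw [h, div_zero]

lemma sqrt_tan_div_le (n : ℕ) {s : ℝ} (h1 : (2*(n:ℝ)+1)*π/2 ≤ s)
    (h2 : s ≤ (2*(n:ℝ)+1)*π/2 + π/2) :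
    Real.sqrt (|Real.tan s| / s) ≤ (s - (2*(n:ℝ)+1)*π/2) ^ (-(1:ℝ)/2) := by
  have hπ := Real.pi_pos
  have ha2 : π/2 ≤ (2*(n:ℝ)+1)*π/2 := by
    have : (1:ℝ) ≤ 2*(n:ℝ)+1 := by
      have := Nat.cast_nonneg (α:=ℝ) n; linarith
    nlinarith
  rcases eq_or_lt_of_le h1 with he | hlt
  · rw [← he, sub_self, tan_at_odd, abs_zero, zero_div, Real.sqrt_zero,
      Real.zero_rpow (by norm_num)]
  · have hu : 0 < s - (2*(n:ℝ)+1)*π/2 := sub_pos.2 hlt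
    have hu2 : s - (2*(n:ℝ)+1)*π/2 ≤ π/2 := by linarith
    have hs0 : (0:ℝ) < s := by linarith
    have hcos : |Real.cos s| = Real.sin (s - (2*(n:ℝ)+1)*π/2) := by
      have := abs_cos_shift n hu.le (by linarith : s - (2*(n:ℝ)+1)*π/2 ≤ π)
      rwa [add_sub_cancel] at this
    have hsin : (2/π) * (s - (2*(n:ℝ)+1)*π/2) ≤ Real.sin (s - (2*(n:ℝ)+1)*π/2) :=
      Real.mul_le_sin hu.le hu2
    have hsinpos : 0 < Real.sin (s - (2*(n:ℝ)+1)*π/2) := by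
      have : 0 < (2/π) * (s - (2*(n:ℝ)+1)*π/2) := by positivity
      linarith
    have htan : |Real.tan s| * Real.sin (s - (2*(n:ℝ)+1)*π/2) ≤ 1 := by
      rw [Real.tan_eq_sin_div_cos, abs_div, div_mul_eq_mul_div, hcos,
        div_le_one hsinpos]
      have h1' : |Real.sin s| ≤ 1 := abs_sin_le_one s
      nlinarith [abs_nonneg (Real.sin s), hsinpos]
    have h2u : 2*(s - (2*(n:ℝ)+1)*π/2) ≤ π * Real.sin (s - (2*(n:ℝ)+1)*π/2) := by
      calc 2*(s - (2*(n:ℝ)+1)*π/2) = π*((2/π)*(s - (2*(n:ℝ)+1)*π/2)) := by field_simp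
        _ ≤ π * Real.sin (s - (2*(n:ℝ)+1)*π/2) := by nlinarith [hsin]
    have hmain : |Real.tan s| / s ≤ 1 / (s - (2*(n:ℝ)+1)*π/2) := by
      rw [div_le_div_iff₀ hs0 hu]
      nlinarith [mul_le_mul_of_nonneg_left h2u (abs_nonneg (Real.tan s)), htan, hπ, ha2,
        abs_nonneg (Real.tan s)]
    have hsq := Real.sqrt_le_sqrt hmain
    rw [show (1:ℝ)/(s - (2*(n:ℝ)+1)*π/2) = (s - (2*(n:ℝ)+1)*π/2)⁻¹ by ring,
      Real.sqrt_inv] at hsq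
    rw [show -(1:ℝ)/2 = -(1/2:ℝ) by norm_num, Real.rpow_neg hu.le, ← Real.sqrt_eq_rpow]
    exact hsq

lemma F_meas (t : ℝ) :
    Measurable (fun s : ℝ => Real.exp (-s*t) * Real.sqrt (|Real.tan s| / s)) := by
  have htan : Measurable Real.tan := by
    have h : Real.tan = fun x => Real.sin x / Real.cos x :=
      funext fun x => Real.tan_eq_sin_div_cos x
    rw [h]
    exact Real.measurable_sin.div Real.measurable_cos
  exact ((measurable_id.neg.mul_const t).exp).mul ((htan.abs.div measurable_id).sqrt)


lemma rpow_integrable (a b : ℝ) :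
    IntervalIntegrable (fun s => (s - a) ^ (-(1:ℝ)/2)) volume a b := by
  have h : (-1:ℝ) < -(1:ℝ)/2 := by norm_num
  simpa using (intervalIntegral.intervalIntegrable_rpow' (a := a - a) (b := b - a) h).comp_sub_right a

lemma F_nonneg (t s : ℝ) : 0 ≤ Real.exp (-s*t) * Real.sqrt (|Real.tan s| / s) :=
  mul_nonneg (Real.exp_pos _).le (Real.sqrt_nonneg _)

lemma branch_integrable (n : ℕ) {t : ℝ} (ht : 0 ≤ t) :
    IntervalIntegrable (fun s => Real.exp (-s*t) * Real.sqrt (|Real.tan s| / s)) volume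
      ((2*(n:ℝ)+1)*π/2) ((2*(n:ℝ)+1)*π/2 + π/2) := by
  have hπ := Real.pi_pos
  have hab : (2*(n:ℝ)+1)*π/2 ≤ (2*(n:ℝ)+1)*π/2 + π/2 := by linarith
  have ha0 : (0:ℝ) < (2*(n:ℝ)+1)*π/2 := by positivity
  rw [intervalIntegrable_iff_integrableOn_Ioc_of_le hab]
  apply MeasureTheory.Integrable.mono'
    (g := fun s => (s - (2*(n:ℝ)+1)*π/2) ^ (-(1:ℝ)/2))
  · exact (intervalIntegrable_iff_integrableOn_Ioc_of_le hab).1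
      (rpow_integrable ((2*(n:ℝ)+1)*π/2) ((2*(n:ℝ)+1)*π/2 + π/2))
  · exact ((F_meas t).aestronglyMeasurable).restrict
  · refine (ae_restrict_iff' measurableSet_Ioc).2 (ae_of_all _ (fun s hs => ?_))
    rw [Real.norm_eq_abs, abs_of_nonneg (F_nonneg t s)]
    have he : Real.exp (-s*t) ≤ 1 := by
      rw [Real.exp_le_one_iff]
      have : 0 < s := lt_trans ha0 hs.1
      nlinarith
    calc Real.exp (-s*t) * Real.sqrt (|Real.tan s| / s)
        ≤ 1 * ((s - (2*(n:ℝ)+1)*π/2) ^ (-(1:ℝ)/2)) :=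
          mul_le_mul he (sqrt_tan_div_le n hs.1.le hs.2) (Real.sqrt_nonneg _) zero_le_one
      _ = (s - (2*(n:ℝ)+1)*π/2) ^ (-(1:ℝ)/2) := one_mul _

lemma rpow_integral_eval (a : ℝ) :
    (∫ s in a..(a + π/2), (s - a) ^ (-(1:ℝ)/2)) = 2 * Real.sqrt (π/2) := by
  have h := intervalIntegral.integral_comp_sub_right (a := a) (b := a + π/2)
    (fun u => u ^ (-(1:ℝ)/2)) a
  rw [h, show a - a = (0:ℝ) by ring, show a + π/2 - a = π/2 by ring,
    integral_rpow (Or.inl (by norm_num : (-1:ℝ) < -(1:ℝ)/2))]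
  rw [show -(1:ℝ)/2 + 1 = (1:ℝ)/2 by norm_num, Real.zero_rpow (by norm_num : (1:ℝ)/2 ≠ 0),
    ← Real.sqrt_eq_rpow]
  ring

lemma branch_le (n : ℕ) {t : ℝ} (ht : 0 ≤ t) :
    (∫ s in ((2*(n:ℝ)+1)*π/2)..((2*(n:ℝ)+1)*π/2 + π/2),
        Real.exp (-s*t) * Real.sqrt (|Real.tan s| / s))
      ≤ Real.exp (-((2*(n:ℝ)+1)*π/2)*t) * (2 * Real.sqrt (π/2)) := by
  have hπ := Real.pi_pos
  have hab : (2*(n:ℝ)+1)*π/2 ≤ (2*(n:ℝ)+1)*π/2 + π/2 := by linarith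
  have h1 : (∫ s in ((2*(n:ℝ)+1)*π/2)..((2*(n:ℝ)+1)*π/2 + π/2),
        Real.exp (-s*t) * Real.sqrt (|Real.tan s| / s))
      ≤ ∫ s in ((2*(n:ℝ)+1)*π/2)..((2*(n:ℝ)+1)*π/2 + π/2),
        Real.exp (-((2*(n:ℝ)+1)*π/2)*t) * ((s - (2*(n:ℝ)+1)*π/2) ^ (-(1:ℝ)/2)) := by
    apply intervalIntegral.integral_mono_on hab (branch_integrable n ht)
      ((rpow_integrable _ _).const_mul _)
    intro s hs
    have he : Real.exp (-s*t) ≤ Real.exp (-((2*(n:ℝ)+1)*π/2)*t) := by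
      apply Real.exp_le_exp.2
      nlinarith [hs.1]
    exact mul_le_mul he (sqrt_tan_div_le n hs.1 hs.2) (Real.sqrt_nonneg _) (Real.exp_pos _).le
  rwa [intervalIntegral.integral_const_mul, rpow_integral_eval] at h1

lemma branch_nonneg (n : ℕ) (t : ℝ) :
    0 ≤ ∫ s in ((2*(n:ℝ)+1)*π/2)..((2*(n:ℝ)+1)*π/2 + π/2),
        Real.exp (-s*t) * Real.sqrt (|Real.tan s| / s) := by
  have hπ := Real.pi_pos
  apply intervalIntegral.integral_nonneg (by linarith)
  exact fun s _ => F_nonneg t s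


lemma preim_add : ((fun x : ℝ => x + π/2) ⁻¹' (Ioi (π/2))) = Ioi (0:ℝ) := by
  ext x; simp

lemma shift_Ioi (f : ℝ → ℝ) :
    (∫ s in Ioi (π/2 : ℝ), f s) = ∫ u in Ioi (0:ℝ), f (u + π/2) := by
  have h := (measurePreserving_add_right (volume : Measure ℝ) (π/2)).setIntegral_preimage_emb
    (MeasurableEquiv.addRight (π/2)).measurableEmbedding f (Ioi (π/2))
  rw [← h, preim_add]

lemma shift_integrableOn {f : ℝ → ℝ}
    (hf : IntegrableOn (fun u => f (u + π/2)) (Ioi (0:ℝ))) :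
    IntegrableOn f (Ioi (π/2 : ℝ)) := by
  have h := ((measurePreserving_add_right (volume : Measure ℝ) (π/2)).restrict_preimage_emb
      (MeasurableEquiv.addRight (π/2)).measurableEmbedding (Ioi (π/2))).integrable_comp_emb
      (MeasurableEquiv.addRight (π/2)).measurableEmbedding (g := f)
  rw [preim_add] at h
  exact h.mp hf

lemma integrableOn_rpow_exp {k t : ℝ} (hk : 0 < k) (ht : 0 < t) :
    IntegrableOn (fun u : ℝ => u ^ (k-1) * Real.exp (-(t*u))) (Ioi (0:ℝ)) := by
  have h0 : IntegrableOn (fun x : ℝ => Real.exp (-x) * x ^ (k-1)) (Ioi 0) :=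
    Real.GammaIntegral_convergent hk
  have h2iff := integrableOn_Ioi_comp_mul_left_iff
      (fun x : ℝ => Real.exp (-x) * x ^ (k-1)) 0 ht
  rw [mul_zero] at h2iff
  have h1 : IntegrableOn (fun x : ℝ => Real.exp (-(t*x)) * (t*x) ^ (k-1)) (Ioi 0) :=
    h2iff.2 h0
  have h2 : IntegrableOn
      (fun x : ℝ => (t ^ (k-1))⁻¹ * (Real.exp (-(t*x)) * (t*x) ^ (k-1))) (Ioi 0) :=
    h1.const_mul ((t ^ (k-1))⁻¹)
  apply MeasureTheory.IntegrableOn.congr_fun h2 ?_ measurableSet_Ioi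
  intro u hu
  have hu0 : (0:ℝ) < u := hu
  have htk : t ^ (k-1) ≠ 0 := (Real.rpow_pos_of_pos ht _).ne'
  show (t ^ (k-1))⁻¹ * (Real.exp (-(t*u)) * (t*u) ^ (k-1)) = u ^ (k-1) * Real.exp (-(t*u))
  rw [Real.mul_rpow ht.le hu0.le]
  field_simp

lemma W_val {k t : ℝ} (hk : 0 < k) (ht : 0 < t) :
    (∫ s in Ioi (π/2 : ℝ), Real.exp (-s*t) * (s - π/2) ^ (k-1))
      = Real.exp (-(π/2)*t) * ((1/t)^k * Real.Gamma k) := by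
  rw [shift_Ioi]
  have heq : ∀ u : ℝ, Real.exp (-(u + π/2)*t) * ((u + π/2) - π/2) ^ (k-1)
      = Real.exp (-(π/2)*t) * ((fun x : ℝ => x ^ (k-1) * Real.exp (-(t*x))) u) := by
    intro u
    have h1 : (u + π/2) - π/2 = u := by ring
    rw [h1, show -(u+π/2)*t = -(t*u) + -(π/2)*t by ring, Real.exp_add]
    ring
  simp only [heq]
  rw [MeasureTheory.integral_const_mul, Real.integral_rpow_mul_exp_neg_mul_Ioi hk ht]

lemma W_integrable {k t : ℝ} (hk : 0 < k) (ht : 0 < t) :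
    IntegrableOn (fun s => Real.exp (-s*t) * (s - π/2) ^ (k-1)) (Ioi (π/2 : ℝ)) := by
  apply shift_integrableOn
  have h : IntegrableOn
      (fun u : ℝ => Real.exp (-(π/2)*t) * (u ^ (k-1) * Real.exp (-(t*u)))) (Ioi 0) :=
    (integrableOn_rpow_exp hk ht).const_mul (Real.exp (-(π/2)*t))
  apply MeasureTheory.IntegrableOn.congr_fun h ?_ measurableSet_Ioi
  intro u _
  show Real.exp (-(π/2)*t) * (u ^ (k-1) * Real.exp (-(t*u)))
      = Real.exp (-(u + π/2)*t) * ((u + π/2) - π/2) ^ (k-1)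
  have h1 : (u + π/2) - π/2 = u := by ring
  rw [h1, show -(u+π/2)*t = -(t*u) + -(π/2)*t by ring, Real.exp_add]
  ring

lemma W1_val {t : ℝ} (ht : 0 < t) :
    (∫ s in Ioi (π/2 : ℝ), Real.exp (-s*t) * (s - π/2) ^ (-(1:ℝ)/2))
      = Real.exp (-(π/2)*t) * (Real.sqrt π / Real.sqrt t) := by
  have h := W_val (k := 1/2) (by norm_num) ht
  rw [show (1:ℝ)/2 - 1 = -(1:ℝ)/2 by norm_num] at h
  rw [h, Real.Gamma_one_half_eq]
  rw [show ((1:ℝ)/t) = t⁻¹ by ring, ← Real.sqrt_eq_rpow, Real.sqrt_inv]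
  ring

lemma W3_val {t : ℝ} (ht : 0 < t) :
    (∫ s in Ioi (π/2 : ℝ), Real.exp (-s*t) * (s - π/2) ^ ((1:ℝ)/2))
      = Real.exp (-(π/2)*t) * (Real.sqrt π / 2 / (t * Real.sqrt t)) := by
  have h := W_val (k := 3/2) (by norm_num) ht
  rw [show (3:ℝ)/2 - 1 = (1:ℝ)/2 by norm_num] at h
  rw [h]
  have hg : Real.Gamma ((3:ℝ)/2) = Real.sqrt π / 2 := by
    rw [show (3:ℝ)/2 = 1/2 + 1 by norm_num, Real.Gamma_add_one (by norm_num),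
      Real.Gamma_one_half_eq]
    ring
  have hp : ((1:ℝ)/t) ^ ((3:ℝ)/2) = 1 / (t * Real.sqrt t) := by
    rw [show (3:ℝ)/2 = 1 + 1/2 by norm_num, Real.rpow_add (by positivity), Real.rpow_one,
      ← Real.sqrt_eq_rpow, one_div, Real.sqrt_inv]
    rw [one_div, mul_inv]
  rw [hg, hp]
  ring

lemma W1_integrable {t : ℝ} (ht : 0 < t) :
    IntegrableOn (fun s => Real.exp (-s*t) * (s - π/2) ^ (-(1:ℝ)/2)) (Ioi (π/2 : ℝ)) := by
  have h := W_integrable (k := 1/2) (by norm_num) ht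
  rw [show (1:ℝ)/2 - 1 = -(1:ℝ)/2 by norm_num] at h
  exact h

lemma W3_integrable {t : ℝ} (ht : 0 < t) :
    IntegrableOn (fun s => Real.exp (-s*t) * (s - π/2) ^ ((1:ℝ)/2)) (Ioi (π/2 : ℝ)) := by
  have h := W_integrable (k := 3/2) (by norm_num) ht
  rw [show (3:ℝ)/2 - 1 = (1:ℝ)/2 by norm_num] at h
  exact h


lemma tan_div_le0 {s : ℝ} (h1 : π/2 < s) (h2 : s ≤ π) :
    (s - π/2) * |Real.tan s| / s ≤ 1 := by
  have hπ := Real.pi_pos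
  have hu : 0 < s - π/2 := by linarith
  have hu2 : s - π/2 ≤ π/2 := by linarith
  have hs0 : (0:ℝ) < s := by linarith
  have hcos : |Real.cos s| = Real.sin (s - π/2) := by
    have h := abs_cos_shift 0 hu.le (by linarith : s - π/2 ≤ π)
    norm_num at h
    exact h
  have hsin : (2/π) * (s - π/2) ≤ Real.sin (s - π/2) := Real.mul_le_sin hu.le hu2
  have hsinpos : 0 < Real.sin (s - π/2) := by
    have : 0 < (2/π) * (s - π/2) := by positivity
    linarith
  have htan : |Real.tan s| * Real.sin (s - π/2) ≤ 1 := by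
    rw [Real.tan_eq_sin_div_cos, abs_div, div_mul_eq_mul_div, hcos, div_le_one hsinpos]
    have h1' : |Real.sin s| ≤ 1 := abs_sin_le_one s
    nlinarith [abs_nonneg (Real.sin s)]
  have h2u : 2*(s - π/2) ≤ π * Real.sin (s - π/2) := by
    calc 2*(s - π/2) = π*((2/π)*(s - π/2)) := by field_simp
      _ ≤ π * Real.sin (s - π/2) := by nlinarith [hsin]
  rw [div_le_one hs0]
  nlinarith [mul_le_mul_of_nonneg_left h2u (abs_nonneg (Real.tan s)), htan, hπ,
    abs_nonneg (Real.tan s)]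

lemma g_le_one {s : ℝ} (h1 : π/2 < s) (h2 : s ≤ π) :
    Real.sqrt ((s - π/2) * |Real.tan s| / s) ≤ 1 := by
  rw [show (1:ℝ) = Real.sqrt 1 by rw [Real.sqrt_one]]
  exact Real.sqrt_le_sqrt (tan_div_le0 h1 h2)

lemma sqrt_split {s : ℝ} (h1 : π/2 < s) :
    Real.sqrt (|Real.tan s| / s)
      = Real.sqrt ((s - π/2) * |Real.tan s| / s) / Real.sqrt (s - π/2) := by
  have hu : 0 < s - π/2 := by linarith
  rw [show (s - π/2) * |Real.tan s| / s = (s - π/2) * (|Real.tan s| / s) by ring,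
    Real.sqrt_mul hu.le, mul_comm, mul_div_assoc,
    div_self (Real.sqrt_ne_zero'.2 hu), mul_one]

lemma h_est {u : ℝ} (hu0 : 0 < u) (hu : u ≤ π/4) :
    |u * (Real.cos u / Real.sin u) / (π/2 + u) - 2/π| ≤ (3/2)*u := by
  have hπ := Real.pi_pos
  have hπ4 : π < 3.15 := Real.pi_lt_d2
  have hπ3 : π > 3.14 := by nlinarith [Real.pi_gt_d6]
  have huπ : u < π := by nlinarith
  have hs : 0 < Real.sin u := Real.sin_pos_of_pos_of_lt_pi hu0 huπ
  have hcos1 : Real.cos u ≤ 1 := Real.cos_le_one u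
  have hcoslb : 1 - u^2/2 ≤ Real.cos u := Real.one_sub_sq_div_two_le_cos
  have hsinle : Real.sin u ≤ u := Real.sin_le hu0.le
  have hsin : (2/π) * u ≤ Real.sin u := Real.mul_le_sin hu0.le (by nlinarith)
  have h2u : 2*u ≤ π * Real.sin u := by
    calc 2*u = π*((2/π)*u) := by field_simp
      _ ≤ π * Real.sin u := by nlinarith [hsin]
  have hcp : 0 < Real.cos u := Real.cos_pos_of_mem_Ioo ⟨by nlinarith, by nlinarith⟩
  have hb1 : 0 ≤ Real.sin u - u * Real.cos u := by
    have hut : u < Real.tan u := Real.lt_tan hu0 (by nlinarith)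
    have htm := Real.tan_mul_cos hcp.ne'
    nlinarith
  have hb2 : Real.sin u - u * Real.cos u ≤ u^3/2 := by nlinarith
  have hkey : u * (Real.cos u / Real.sin u) / (π/2 + u) - 2/π
      = (π * u * Real.cos u - (π + 2*u) * Real.sin u) / (π * (π/2 + u) * Real.sin u) := by
    field_simp
  have hDpos : 0 < π * (π/2 + u) * Real.sin u := by positivity
  rw [hkey, abs_div, abs_of_pos hDpos, div_le_iff₀ hDpos]
  have hnum : |π * u * Real.cos u - (π + 2*u) * Real.sin u| ≤ 4*u^2 := by
    have hrw : π * u * Real.cos u - (π + 2*u) * Real.sin u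
        = -(π * (Real.sin u - u * Real.cos u) + 2*u*Real.sin u) := by ring
    rw [hrw, abs_neg, abs_of_nonneg (by nlinarith)]
    nlinarith
  have hD_lb : π * u ≤ π * (π/2 + u) * Real.sin u := by
    nlinarith [mul_le_mul_of_nonneg_left h2u hπ.le, mul_nonneg hπ.le
      (mul_nonneg hu0.le hs.le)]
  calc |π * u * Real.cos u - (π + 2*u) * Real.sin u| ≤ 4*u^2 := hnum
    _ ≤ (3/2)*u*(π*u) := by nlinarith
    _ ≤ (3/2)*u*(π * (π/2 + u) * Real.sin u) := by nlinarith [hD_lb, hu0]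

lemma g_est {s : ℝ} (h1 : π/2 < s) (h2 : s ≤ 3*π/4) :
    |Real.sqrt ((s - π/2) * |Real.tan s| / s) - Real.sqrt (2/π)| ≤ 2*(s - π/2) := by
  have hπ := Real.pi_pos
  have hπ4 : π < 3.15 := Real.pi_lt_d2
  have hu0 : 0 < s - π/2 := by linarith
  have hu4 : s - π/2 ≤ π/4 := by linarith
  have hs0 : (0:ℝ) < s := by linarith
  have hsin_eq : Real.sin s = Real.cos (s - π/2) := by
    have := Real.sin_add_pi_div_two (s - π/2)
    rwa [sub_add_cancel] at this
  have hcos_eq : Real.cos s = -Real.sin (s - π/2) := by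
    have := Real.cos_add_pi_div_two (s - π/2)
    rwa [sub_add_cancel] at this
  have hsp : 0 < Real.sin (s - π/2) :=
    Real.sin_pos_of_pos_of_lt_pi hu0 (by nlinarith)
  have hcp : 0 < Real.cos (s - π/2) :=
    Real.cos_pos_of_mem_Ioo ⟨by nlinarith, by nlinarith⟩
  have htan : |Real.tan s| = Real.cos (s - π/2) / Real.sin (s - π/2) := by
    rw [Real.tan_eq_sin_div_cos, abs_div, hsin_eq, hcos_eq, abs_neg,
      abs_of_pos hcp, abs_of_pos hsp]
  have hexpr : (s - π/2) * |Real.tan s| / s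
      = (s - π/2) * (Real.cos (s - π/2) / Real.sin (s - π/2)) / (π/2 + (s - π/2)) := by
    rw [htan, show π/2 + (s - π/2) = s by ring]
  have hanonneg : 0 ≤ (s - π/2) * |Real.tan s| / s := by positivity
  have h2πpos : (0:ℝ) < 2/π := by positivity
  have hdiff := sqrt_diff_le hanonneg h2πpos
  have hest := h_est hu0 hu4
  rw [← hexpr] at hest
  have hsq : Real.sqrt (π/2) ≤ 4/3 := by
    have h16 : π/2 ≤ (4/3)^2 := by nlinarith
    calc Real.sqrt (π/2) ≤ Real.sqrt ((4/3)^2) := Real.sqrt_le_sqrt h16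
      _ = 4/3 := Real.sqrt_sq (by norm_num)
  have hinv : (Real.sqrt (2/π))⁻¹ = Real.sqrt (π/2) := by
    rw [← Real.sqrt_inv, show ((2:ℝ)/π)⁻¹ = π/2 by field_simp]
  calc |Real.sqrt ((s - π/2) * |Real.tan s| / s) - Real.sqrt (2/π)|
      ≤ |(s - π/2) * |Real.tan s| / s - 2/π| / Real.sqrt (2/π) := hdiff
    _ = |(s - π/2) * |Real.tan s| / s - 2/π| * Real.sqrt (π/2) := by
        rw [div_eq_mul_inv, hinv]
    _ ≤ ((3/2)*(s - π/2)) * (4/3) := by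
        apply mul_le_mul hest hsq (Real.sqrt_nonneg _) (by nlinarith)
    _ = 2*(s - π/2) := by ring


lemma rpow_neg_half {x : ℝ} (hx : 0 < x) : x ^ (-(1:ℝ)/2) = 1 / Real.sqrt x := by
  rw [show -(1:ℝ)/2 = -(1/2:ℝ) by norm_num, Real.rpow_neg hx.le, ← Real.sqrt_eq_rpow, one_div]

lemma rpow_half (x : ℝ) : x ^ ((1:ℝ)/2) = Real.sqrt x := (Real.sqrt_eq_rpow x).symm

set_option maxHeartbeats 1000000 in
lemma main_est {t : ℝ} (ht : 1 ≤ t) :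
    |(∫ s in Ioc (π/2 : ℝ) π, Real.exp (-s*t) * Real.sqrt (|Real.tan s|/s))
        - Real.sqrt 2 * Real.exp (-(π/2)*t) / Real.sqrt t|
      ≤ 30 * (Real.exp (-(π/2)*t) / (t * Real.sqrt t)) := by
  have ht0 : (0:ℝ) < t := lt_of_lt_of_le one_pos ht
  have hπ := Real.pi_pos
  have hπlt : π < 3.15 := Real.pi_lt_d2
  have hπgt : (3.14:ℝ) < π := by nlinarith [Real.pi_gt_d6]
  have hc1 : Real.sqrt (2/π) ≤ 1 := by
    rw [show (1:ℝ) = Real.sqrt 1 by rw [Real.sqrt_one]]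
    apply Real.sqrt_le_sqrt
    rw [div_le_one hπ]; linarith
  have hc0 : 0 ≤ Real.sqrt (2/π) := Real.sqrt_nonneg _
  have hc_sqrt : Real.sqrt (2/π) * Real.sqrt π = Real.sqrt 2 := by
    rw [← Real.sqrt_mul (by positivity) π, div_mul_cancel₀ _ (ne_of_gt hπ)]
  -- integrabilities
  have hw_int : IntegrableOn (fun s => Real.exp (-s*t) * (s - π/2) ^ (-(1:ℝ)/2))
      (Ioi (π/2)) := W1_integrable ht0
  have hv_int : IntegrableOn (fun s => Real.exp (-s*t) * (s - π/2) ^ ((1:ℝ)/2))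
      (Ioi (π/2)) := W3_integrable ht0
  have hF_int : IntegrableOn (fun s => Real.exp (-s*t) * Real.sqrt (|Real.tan s|/s))
      (Ioc (π/2) π) := by
    have h := branch_integrable 0 ht0.le
    have e1 : (2*((0:ℕ):ℝ)+1)*π/2 = π/2 := by norm_num
    rw [e1, show π/2 + π/2 = π by ring] at h
    exact (intervalIntegrable_iff_integrableOn_Ioc_of_le (by linarith)).1 h
  have hwc_int : IntegrableOn
      (fun s => Real.sqrt (2/π) * (Real.exp (-s*t) * (s - π/2) ^ (-(1:ℝ)/2)))
      (Ioc (π/2) π) :=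
    (hw_int.mono_set Ioc_subset_Ioi_self).const_mul _
  have hsub_int : IntegrableOn
      (fun s => Real.exp (-s*t) * Real.sqrt (|Real.tan s|/s)
        - Real.sqrt (2/π) * (Real.exp (-s*t) * (s - π/2) ^ (-(1:ℝ)/2)))
      (Ioc (π/2) π) := hF_int.sub hwc_int
  -- decomposition of the main term
  have hsplit : (∫ s in Ioi (π/2 : ℝ), Real.exp (-s*t) * (s - π/2) ^ (-(1:ℝ)/2))
      = (∫ s in Ioc (π/2 : ℝ) π, Real.exp (-s*t) * (s - π/2) ^ (-(1:ℝ)/2))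
        + ∫ s in Ioi (π : ℝ), Real.exp (-s*t) * (s - π/2) ^ (-(1:ℝ)/2) := by
    rw [← Ioc_union_Ioi_eq_Ioi (by linarith : π/2 ≤ π),
      setIntegral_union (Ioc_disjoint_Ioi le_rfl) measurableSet_Ioi
        (hw_int.mono_set Ioc_subset_Ioi_self)
        (hw_int.mono_set (Ioi_subset_Ioi (by linarith)))]
  have hmain : Real.sqrt 2 * Real.exp (-(π/2)*t) / Real.sqrt t
      = Real.sqrt (2/π) * (∫ s in Ioc (π/2 : ℝ) π, Real.exp (-s*t) * (s - π/2) ^ (-(1:ℝ)/2))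
        + Real.sqrt (2/π) * ∫ s in Ioi (π : ℝ), Real.exp (-s*t) * (s - π/2) ^ (-(1:ℝ)/2) := by
    have h1 := W1_val ht0
    rw [hsplit] at h1
    rw [← hc_sqrt, ← mul_add, h1]
    ring
  rw [hmain]
  -- triangle inequality
  have htri : |(∫ s in Ioc (π/2 : ℝ) π, Real.exp (-s*t) * Real.sqrt (|Real.tan s|/s))
      - (Real.sqrt (2/π) * (∫ s in Ioc (π/2 : ℝ) π, Real.exp (-s*t) * (s - π/2) ^ (-(1:ℝ)/2))
        + Real.sqrt (2/π) * ∫ s in Ioi (π : ℝ), Real.exp (-s*t) * (s - π/2) ^ (-(1:ℝ)/2))|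
      ≤ |(∫ s in Ioc (π/2 : ℝ) π, Real.exp (-s*t) * Real.sqrt (|Real.tan s|/s))
          - Real.sqrt (2/π) * ∫ s in Ioc (π/2 : ℝ) π, Real.exp (-s*t) * (s - π/2) ^ (-(1:ℝ)/2)|
        + |Real.sqrt (2/π) * ∫ s in Ioi (π : ℝ), Real.exp (-s*t) * (s - π/2) ^ (-(1:ℝ)/2)| := by
    rw [show (∫ s in Ioc (π/2 : ℝ) π, Real.exp (-s*t) * Real.sqrt (|Real.tan s|/s))
      - (Real.sqrt (2/π) * (∫ s in Ioc (π/2 : ℝ) π, Real.exp (-s*t) * (s - π/2) ^ (-(1:ℝ)/2))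
        + Real.sqrt (2/π) * ∫ s in Ioi (π : ℝ), Real.exp (-s*t) * (s - π/2) ^ (-(1:ℝ)/2))
      = ((∫ s in Ioc (π/2 : ℝ) π, Real.exp (-s*t) * Real.sqrt (|Real.tan s|/s))
          - Real.sqrt (2/π) * ∫ s in Ioc (π/2 : ℝ) π, Real.exp (-s*t) * (s - π/2) ^ (-(1:ℝ)/2))
        - Real.sqrt (2/π) * ∫ s in Ioi (π : ℝ), Real.exp (-s*t) * (s - π/2) ^ (-(1:ℝ)/2) by ring]
    exact abs_sub _ _
  refine htri.trans ?_
  -- bound on the tail integral over Ioi π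
  have hexp_int : IntegrableOn (fun s : ℝ => Real.exp (-s)) (Ioi (π:ℝ)) := by
    have h := exp_neg_integrableOn_Ioi (π:ℝ) one_pos
    simpa using h
  have hC : |Real.sqrt (2/π) * ∫ s in Ioi (π : ℝ), Real.exp (-s*t) * (s - π/2) ^ (-(1:ℝ)/2)|
      ≤ 7 * (Real.exp (-(π/2)*t) / (t * Real.sqrt t)) := by
    have hw_nonneg : 0 ≤ ∫ s in Ioi (π : ℝ), Real.exp (-s*t) * (s - π/2) ^ (-(1:ℝ)/2) :=
      setIntegral_nonneg measurableSet_Ioi (fun s hs =>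
        mul_nonneg (Real.exp_pos _).le (Real.rpow_nonneg (by simp at hs; linarith) _))
    have hwle : (∫ s in Ioi (π : ℝ), Real.exp (-s*t) * (s - π/2) ^ (-(1:ℝ)/2))
        ≤ Real.exp (-π*t) := by
      have hstep : (∫ s in Ioi (π : ℝ), Real.exp (-s*t) * (s - π/2) ^ (-(1:ℝ)/2))
          ≤ ∫ s in Ioi (π : ℝ), Real.exp (-π*(t-1)) * Real.exp (-s) := by
        apply setIntegral_mono_on (hw_int.mono_set (Ioi_subset_Ioi (by linarith)))
          (hexp_int.const_mul _) measurableSet_Ioi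
        intro s hs
        have hsπ : π < s := hs
        have h1 : (s - π/2) ^ (-(1:ℝ)/2) ≤ 1 :=
          Real.rpow_le_one_of_one_le_of_nonpos (by linarith) (by norm_num)
        have h2 : Real.exp (-s*t) ≤ Real.exp (-π*(t-1)) * Real.exp (-s) := by
          rw [← Real.exp_add]
          apply Real.exp_le_exp.2
          nlinarith
        calc Real.exp (-s*t) * (s - π/2) ^ (-(1:ℝ)/2) ≤ Real.exp (-s*t) * 1 :=
              mul_le_mul_of_nonneg_left h1 (Real.exp_pos _).le
          _ = Real.exp (-s*t) := mul_one _
          _ ≤ Real.exp (-π*(t-1)) * Real.exp (-s) := h2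
      have hval : (∫ s in Ioi (π : ℝ), Real.exp (-π*(t-1)) * Real.exp (-s))
          = Real.exp (-π*t) := by
        rw [MeasureTheory.integral_const_mul, integral_exp_neg_Ioi, ← Real.exp_add]
        congr 1
        ring
      rw [hval] at hstep
      exact hstep
    have h7 : Real.exp (-π*t) ≤ 7 * (Real.exp (-(π/2)*t) / (t * Real.sqrt t)) := by
      refine le_trans ?_ (exp_decay ht)
      apply Real.exp_le_exp.2
      nlinarith
    rw [abs_of_nonneg (mul_nonneg hc0 hw_nonneg)]
    calc Real.sqrt (2/π) * ∫ s in Ioi (π : ℝ), Real.exp (-s*t) * (s - π/2) ^ (-(1:ℝ)/2)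
        ≤ 1 * ∫ s in Ioi (π : ℝ), Real.exp (-s*t) * (s - π/2) ^ (-(1:ℝ)/2) :=
          mul_le_mul_of_nonneg_right hc1 hw_nonneg
      _ = ∫ s in Ioi (π : ℝ), Real.exp (-s*t) * (s - π/2) ^ (-(1:ℝ)/2) := one_mul _
      _ ≤ Real.exp (-π*t) := hwle
      _ ≤ 7 * (Real.exp (-(π/2)*t) / (t * Real.sqrt t)) := h7
  -- bound on the Ioc part
  have hB : |(∫ s in Ioc (π/2 : ℝ) π, Real.exp (-s*t) * Real.sqrt (|Real.tan s|/s))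
      - Real.sqrt (2/π) * ∫ s in Ioc (π/2 : ℝ) π, Real.exp (-s*t) * (s - π/2) ^ (-(1:ℝ)/2)|
      ≤ 23 * (Real.exp (-(π/2)*t) / (t * Real.sqrt t)) := by
    rw [← MeasureTheory.integral_const_mul, ← MeasureTheory.integral_sub hF_int hwc_int]
    have habs : |∫ s in Ioc (π/2 : ℝ) π, (Real.exp (-s*t) * Real.sqrt (|Real.tan s|/s)
        - Real.sqrt (2/π) * (Real.exp (-s*t) * (s - π/2) ^ (-(1:ℝ)/2)))|
        ≤ ∫ s in Ioc (π/2 : ℝ) π, |Real.exp (-s*t) * Real.sqrt (|Real.tan s|/s)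
            - Real.sqrt (2/π) * (Real.exp (-s*t) * (s - π/2) ^ (-(1:ℝ)/2))| := by
      have h := MeasureTheory.norm_integral_le_integral_norm
        (μ := volume.restrict (Ioc (π/2 : ℝ) π))
        (fun s => Real.exp (-s*t) * Real.sqrt (|Real.tan s|/s)
          - Real.sqrt (2/π) * (Real.exp (-s*t) * (s - π/2) ^ (-(1:ℝ)/2)))
      simpa [Real.norm_eq_abs] using h
    refine habs.trans ?_
    rw [← Ioc_union_Ioc_eq_Ioc (by linarith : π/2 ≤ 3*π/4) (by linarith : 3*π/4 ≤ π),
      setIntegral_union (Ioc_disjoint_Ioc_of_le le_rfl) measurableSet_Ioc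
        ((hsub_int.mono_set (Ioc_subset_Ioc_right (by linarith))).abs)
        ((hsub_int.mono_set (Ioc_subset_Ioc_left (by linarith))).abs)]
    -- piece 1
    have hp1 : (∫ s in Ioc (π/2 : ℝ) (3*π/4), |Real.exp (-s*t) * Real.sqrt (|Real.tan s|/s)
        - Real.sqrt (2/π) * (Real.exp (-s*t) * (s - π/2) ^ (-(1:ℝ)/2))|)
        ≤ 2 * (Real.exp (-(π/2)*t) / (t * Real.sqrt t)) := by
      have hmono : (∫ s in Ioc (π/2 : ℝ) (3*π/4), |Real.exp (-s*t) * Real.sqrt (|Real.tan s|/s)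
          - Real.sqrt (2/π) * (Real.exp (-s*t) * (s - π/2) ^ (-(1:ℝ)/2))|)
          ≤ ∫ s in Ioc (π/2 : ℝ) (3*π/4),
              2 * (Real.exp (-s*t) * (s - π/2) ^ ((1:ℝ)/2)) := by
        apply setIntegral_mono_on
          ((hsub_int.mono_set (Ioc_subset_Ioc_right (by linarith))).abs)
          ((hv_int.mono_set Ioc_subset_Ioi_self).const_mul 2) measurableSet_Ioc
        intro s hs
        have h1 : π/2 < s := hs.1
        have hu : 0 < s - π/2 := by linarith
        have hsqu : 0 < Real.sqrt (s - π/2) := Real.sqrt_pos.2 hu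
        have heq : Real.exp (-s*t) * Real.sqrt (|Real.tan s|/s)
            - Real.sqrt (2/π) * (Real.exp (-s*t) * (s - π/2) ^ (-(1:ℝ)/2))
            = (Real.exp (-s*t) / Real.sqrt (s - π/2))
              * (Real.sqrt ((s - π/2) * |Real.tan s| / s) - Real.sqrt (2/π)) := by
          rw [sqrt_split h1, rpow_neg_half hu]
          ring
        rw [heq, abs_mul, abs_of_pos (by positivity :
          0 < Real.exp (-s*t) / Real.sqrt (s - π/2))]
        calc Real.exp (-s*t) / Real.sqrt (s - π/2)
              * |Real.sqrt ((s - π/2) * |Real.tan s| / s) - Real.sqrt (2/π)|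
            ≤ Real.exp (-s*t) / Real.sqrt (s - π/2) * (2*(s - π/2)) :=
              mul_le_mul_of_nonneg_left (g_est h1 hs.2) (by positivity)
          _ = 2 * (Real.exp (-s*t) * ((s - π/2) / Real.sqrt (s - π/2))) := by ring
          _ = 2 * (Real.exp (-s*t) * (s - π/2) ^ ((1:ℝ)/2)) := by
              rw [Real.div_sqrt, rpow_half]
      refine hmono.trans ?_
      have hmono2 : (∫ s in Ioc (π/2 : ℝ) (3*π/4),
          2 * (Real.exp (-s*t) * (s - π/2) ^ ((1:ℝ)/2)))
          ≤ ∫ s in Ioi (π/2 : ℝ), 2 * (Real.exp (-s*t) * (s - π/2) ^ ((1:ℝ)/2)) := by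
        apply setIntegral_mono_set (hv_int.const_mul 2)
        · refine (ae_restrict_iff' measurableSet_Ioi).2 (ae_of_all _ (fun s hs => ?_))
          have hs' : (π:ℝ)/2 < s := hs
          exact mul_nonneg (by norm_num)
            (mul_nonneg (Real.exp_pos _).le (Real.rpow_nonneg (by linarith) _))
        · exact (Ioc_subset_Ioi_self).eventuallyLE
      refine hmono2.trans ?_
      rw [MeasureTheory.integral_const_mul, W3_val ht0]
      have hsqπ : Real.sqrt π ≤ 2 := by
        rw [show (2:ℝ) = Real.sqrt 4 by rw [show (4:ℝ) = 2^2 by norm_num, Real.sqrt_sq]; norm_num]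
        exact Real.sqrt_le_sqrt (by linarith)
      have hX : 0 < Real.exp (-(π/2)*t) / (t * Real.sqrt t) := by positivity
      calc 2 * (Real.exp (-(π/2)*t) * (Real.sqrt π / 2 / (t * Real.sqrt t)))
          = Real.sqrt π * (Real.exp (-(π/2)*t) / (t * Real.sqrt t)) := by ring
        _ ≤ 2 * (Real.exp (-(π/2)*t) / (t * Real.sqrt t)) :=
            mul_le_mul_of_nonneg_right hsqπ hX.le
    -- piece 2
    have hp2 : (∫ s in Ioc (3*π/4 : ℝ) π, |Real.exp (-s*t) * Real.sqrt (|Real.tan s|/s)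
        - Real.sqrt (2/π) * (Real.exp (-s*t) * (s - π/2) ^ (-(1:ℝ)/2))|)
        ≤ 21 * (Real.exp (-(π/2)*t) / (t * Real.sqrt t)) := by
      have hexp_int2 : IntegrableOn (fun s : ℝ => Real.exp (-s*t)) (Ioc (3*π/4 : ℝ) π) := by
        have h := exp_neg_integrableOn_Ioi (3*π/4 : ℝ) ht0
        have h2 : IntegrableOn (fun s : ℝ => Real.exp (-s*t)) (Ioi (3*π/4 : ℝ)) := by
          apply h.congr_fun ?_ measurableSet_Ioi
          intro x _
          simp only []
          congr 1
          ring
        exact h2.mono_set Ioc_subset_Ioi_self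
      have hmono : (∫ s in Ioc (3*π/4 : ℝ) π, |Real.exp (-s*t) * Real.sqrt (|Real.tan s|/s)
          - Real.sqrt (2/π) * (Real.exp (-s*t) * (s - π/2) ^ (-(1:ℝ)/2))|)
          ≤ ∫ s in Ioc (3*π/4 : ℝ) π, 3 * Real.exp (-s*t) := by
        apply setIntegral_mono_on
          ((hsub_int.mono_set (Ioc_subset_Ioc_left (by linarith))).abs)
          (hexp_int2.const_mul 3) measurableSet_Ioc
        intro s hs
        have h1 : π/2 < s := by have := hs.1; linarith
        have hu : 0 < s - π/2 := by linarith
        have hu4 : π/4 ≤ s - π/2 := by have := hs.1; linarith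
        have hsq : (0.8:ℝ) ≤ Real.sqrt (s - π/2) := by
          rw [show (0.8:ℝ) = Real.sqrt 0.64 by
            rw [show (0.64:ℝ) = 0.8^2 by norm_num, Real.sqrt_sq (by norm_num)]]
          exact Real.sqrt_le_sqrt (by nlinarith)
        have hsqu : 0 < Real.sqrt (s - π/2) := by linarith
        have hFle : Real.exp (-s*t) * Real.sqrt (|Real.tan s|/s)
            ≤ Real.exp (-s*t) * (5/4) := by
          rw [sqrt_split h1]
          apply mul_le_mul_of_nonneg_left ?_ (Real.exp_pos _).le
          calc Real.sqrt ((s - π/2) * |Real.tan s| / s) / Real.sqrt (s - π/2)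
              ≤ 1 / (0.8:ℝ) := by
                apply div_le_div₀ (by norm_num) (g_le_one h1 hs.2) (by norm_num) hsq
            _ = 5/4 := by norm_num
        have hwle : Real.sqrt (2/π) * (Real.exp (-s*t) * (s - π/2) ^ (-(1:ℝ)/2))
            ≤ Real.exp (-s*t) * (5/4) := by
          rw [rpow_neg_half hu]
          have h2 : (1:ℝ) / Real.sqrt (s - π/2) ≤ 5/4 := by
            rw [div_le_iff₀ hsqu]
            nlinarith
          have h3 : Real.exp (-s*t) * (1 / Real.sqrt (s - π/2))
              ≤ Real.exp (-s*t) * (5/4) :=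
            mul_le_mul_of_nonneg_left h2 (Real.exp_pos _).le
          calc Real.sqrt (2/π) * (Real.exp (-s*t) * (1 / Real.sqrt (s - π/2)))
              ≤ 1 * (Real.exp (-s*t) * (1 / Real.sqrt (s - π/2))) :=
                mul_le_mul_of_nonneg_right hc1 (by positivity)
            _ = Real.exp (-s*t) * (1 / Real.sqrt (s - π/2)) := one_mul _
            _ ≤ Real.exp (-s*t) * (5/4) := h3
        have hF0 : 0 ≤ Real.exp (-s*t) * Real.sqrt (|Real.tan s|/s) := F_nonneg t s
        have hw0 : 0 ≤ Real.sqrt (2/π) * (Real.exp (-s*t) * (s - π/2) ^ (-(1:ℝ)/2)) := by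
          apply mul_nonneg hc0
          exact mul_nonneg (Real.exp_pos _).le (Real.rpow_nonneg hu.le _)
        rw [abs_sub_comm]
        calc |Real.sqrt (2/π) * (Real.exp (-s*t) * (s - π/2) ^ (-(1:ℝ)/2))
            - Real.exp (-s*t) * Real.sqrt (|Real.tan s|/s)|
            ≤ |Real.sqrt (2/π) * (Real.exp (-s*t) * (s - π/2) ^ (-(1:ℝ)/2))|
              + |Real.exp (-s*t) * Real.sqrt (|Real.tan s|/s)| := abs_sub _ _
          _ = Real.sqrt (2/π) * (Real.exp (-s*t) * (s - π/2) ^ (-(1:ℝ)/2))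
              + Real.exp (-s*t) * Real.sqrt (|Real.tan s|/s) := by
              rw [abs_of_nonneg hw0, abs_of_nonneg hF0]
          _ ≤ Real.exp (-s*t) * (5/4) + Real.exp (-s*t) * (5/4) := add_le_add hwle hFle
          _ ≤ 3 * Real.exp (-s*t) := by nlinarith [Real.exp_pos (-s*t)]
      refine hmono.trans ?_
      have hconst : (∫ s in Ioc (3*π/4 : ℝ) π, 3 * Real.exp (-s*t))
          ≤ ∫ _s in Ioc (3*π/4 : ℝ) π, 3 * Real.exp (-(3*π/4)*t) := by
        apply setIntegral_mono_on (hexp_int2.const_mul 3)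
          (integrableOn_const (by rw [Real.volume_Ioc]; exact ENNReal.ofReal_ne_top))
          measurableSet_Ioc
        intro s hs
        have : Real.exp (-s*t) ≤ Real.exp (-(3*π/4)*t) := by
          apply Real.exp_le_exp.2
          have := hs.1
          nlinarith
        nlinarith [this]
      refine hconst.trans ?_
      rw [MeasureTheory.setIntegral_const, Real.volume_real_Ioc_of_le (by linarith), smul_eq_mul]
      have hd := exp_decay ht
      have hπ4 : π - 3*π/4 ≤ 1 := by nlinarith
      have he := Real.exp_pos (-(3*π/4)*t)
      calc (π - 3*π/4) * (3 * Real.exp (-(3*π/4)*t)) ≤ 1 * (3 * Real.exp (-(3*π/4)*t)) := by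
            nlinarith
        _ = 3 * Real.exp (-(3*π/4)*t) := one_mul _
        _ ≤ 3 * (7 * (Real.exp (-(π/2)*t) / (t * Real.sqrt t))) := by nlinarith [hd]
        _ = 21 * (Real.exp (-(π/2)*t) / (t * Real.sqrt t)) := by ring
    linarith [hp1, hp2]
  linarith [hB, hC]


lemma bounds_eq (n : ℕ) : ((n:ℝ)+1)*π = (2*(n:ℝ)+1)*π/2 + π/2 := by ring

lemma branch_le' (n : ℕ) {t : ℝ} (ht : 0 ≤ t) :
    (∫ s in ((2*(n:ℝ)+1)*π/2)..(((n:ℝ)+1)*π), Real.exp (-s*t) * Real.sqrt (|Real.tan s|/s))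
      ≤ (Real.exp (-(π/2)*t) * (2*Real.sqrt (π/2))) * Real.exp (-(π*t))^n := by
  rw [bounds_eq]
  refine (branch_le n ht).trans (le_of_eq ?_)
  have hexp : Real.exp (-((2*(n:ℝ)+1)*π/2)*t)
      = Real.exp (-(π/2)*t) * Real.exp (-(π*t))^n := by
    rw [← Real.exp_nat_mul, ← Real.exp_add]
    congr 1
    ring
  rw [hexp]
  ring

lemma branch_nonneg' (n : ℕ) (t : ℝ) :
    0 ≤ ∫ s in ((2*(n:ℝ)+1)*π/2)..(((n:ℝ)+1)*π),
      Real.exp (-s*t) * Real.sqrt (|Real.tan s|/s) := by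
  rw [bounds_eq]; exact branch_nonneg n t

lemma branch_summable {t : ℝ} (ht : 0 < t) :
    Summable (fun n : ℕ => ∫ s in ((2*(n:ℝ)+1)*π/2)..(((n:ℝ)+1)*π),
      Real.exp (-s*t) * Real.sqrt (|Real.tan s|/s)) := by
  have hr1 : Real.exp (-(π*t)) < 1 := by
    rw [Real.exp_lt_one_iff]
    have := Real.pi_pos
    nlinarith
  apply Summable.of_nonneg_of_le (fun n => branch_nonneg' n t)
    (fun n => branch_le' n ht.le)
  exact (summable_geometric_of_lt_one (Real.exp_pos _).le hr1).mul_left _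

lemma tail_est {t : ℝ} (ht : 1 ≤ t) :
    (∑' n : ℕ, ∫ s in ((2*((n:ℝ)+1)+1)*π/2)..((((n:ℝ)+1)+1)*π),
      Real.exp (-s*t) * Real.sqrt (|Real.tan s|/s))
      ≤ 42 * (Real.exp (-(π/2)*t) / (t*Real.sqrt t)) := by
  have ht0 : (0:ℝ) < t := lt_of_lt_of_le one_pos ht
  have hπ := Real.pi_pos
  have hπlt : π < 3.15 := Real.pi_lt_d2
  have hπgt : (3.14:ℝ) < π := by nlinarith [Real.pi_gt_d6]
  set C := Real.exp (-(π/2)*t) * (2*Real.sqrt (π/2)) with hC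
  set r := Real.exp (-(π*t)) with hr
  have hr0 : 0 < r := Real.exp_pos _
  have hr1 : r < 1 := by rw [hr, Real.exp_lt_one_iff]; nlinarith
  have hC0 : 0 < C := by positivity
  have hgeom : Summable (fun n : ℕ => (C*r) * r^n) :=
    (summable_geometric_of_lt_one hr0.le hr1).mul_left _
  have hle : ∀ n : ℕ, (∫ s in ((2*((n:ℝ)+1)+1)*π/2)..((((n:ℝ)+1)+1)*π),
      Real.exp (-s*t) * Real.sqrt (|Real.tan s|/s)) ≤ (C*r) * r^n := by
    intro n
    have h := branch_le' (n+1) ht0.le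
    push_cast at h
    refine h.trans (le_of_eq ?_)
    rw [pow_succ]
    ring
  have hsum : (∑' n : ℕ, ∫ s in ((2*((n:ℝ)+1)+1)*π/2)..((((n:ℝ)+1)+1)*π),
      Real.exp (-s*t) * Real.sqrt (|Real.tan s|/s)) ≤ ∑' n : ℕ, (C*r) * r^n := by
    apply Summable.tsum_le_tsum hle ?_ hgeom
    apply Summable.of_nonneg_of_le (fun n => ?_) hle hgeom
    have := branch_nonneg' (n+1) t
    push_cast at this
    exact this
  refine hsum.trans ?_
  rw [tsum_mul_left, tsum_geometric_of_lt_one hr0.le hr1]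
  -- numeric estimates
  have hrquarter : r ≤ 1/4 := by
    rw [hr]
    have h1 : Real.exp (-(π*t)) ≤ Real.exp (-π) := by
      apply Real.exp_le_exp.2; nlinarith
    refine h1.trans ?_
    rw [Real.exp_neg]
    have h2 : (4:ℝ) ≤ Real.exp π := by
      have := Real.add_one_le_exp π
      nlinarith
    rw [inv_le_comm₀ (by positivity) (by norm_num)]
    linarith
  have hinv : (1 - r)⁻¹ ≤ 2 := by
    rw [inv_le_comm₀ (by linarith) (by norm_num)]
    linarith
  have hsq2 : Real.sqrt (π/2) ≤ 1.3 := by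
    rw [show (1.3:ℝ) = Real.sqrt (1.3^2) by rw [Real.sqrt_sq]; norm_num]
    exact Real.sqrt_le_sqrt (by nlinarith)
  have hrd : r ≤ 7 * (Real.exp (-(π/2)*t) / (t*Real.sqrt t)) := by
    have h1 : r ≤ Real.exp (-(3*π/4)*t) := by
      rw [hr]; apply Real.exp_le_exp.2; nlinarith
    exact h1.trans (exp_decay ht)
  have hCle : C ≤ 3 * Real.exp (-(π/2)*t) := by
    rw [hC]
    nlinarith [Real.exp_pos (-(π/2)*t), hsq2]
  have he1 : Real.exp (-(π/2)*t) ≤ 1 := by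
    rw [Real.exp_le_one_iff]; nlinarith
  have hX0 : 0 ≤ Real.exp (-(π/2)*t) / (t*Real.sqrt t) := by positivity
  calc C * r * (1-r)⁻¹ ≤ C * r * 2 := by nlinarith [mul_pos hC0 hr0]
    _ ≤ (3 * Real.exp (-(π/2)*t)) * (7 * (Real.exp (-(π/2)*t) / (t*Real.sqrt t))) * 2 := by
        apply mul_le_mul_of_nonneg_right ?_ (by norm_num)
        apply mul_le_mul hCle hrd hr0.le (by positivity)
    _ = 42 * (Real.exp (-(π/2)*t) * (Real.exp (-(π/2)*t) / (t*Real.sqrt t))) := by ring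
    _ ≤ 42 * (1 * (Real.exp (-(π/2)*t) / (t*Real.sqrt t))) := by
        apply mul_le_mul_of_nonneg_left (mul_le_mul_of_nonneg_right he1 hX0) (by norm_num)
    _ = 42 * (Real.exp (-(π/2)*t) / (t*Real.sqrt t)) := by ring


lemma total_est {t : ℝ} (ht : 1 ≤ t) :
    |(∑' n : ℕ, ∫ s in ((2*(n:ℝ)+1)*π/2)..(((n:ℝ)+1)*π),
        Real.exp (-s*t) * Real.sqrt (|Real.tan s|/s))
      - Real.sqrt 2 * Real.exp (-(π/2)*t) / Real.sqrt t|
      ≤ 72 * (Real.exp (-(π/2)*t) / (t*Real.sqrt t)) := by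
  have ht0 : (0:ℝ) < t := lt_of_lt_of_le one_pos ht
  have hπ := Real.pi_pos
  have hsum := branch_summable ht0
  rw [Summable.tsum_eq_zero_add hsum]
  have h0eq : (∫ s in ((2*((0:ℕ):ℝ)+1)*π/2)..((((0:ℕ):ℝ)+1)*π),
      Real.exp (-s*t) * Real.sqrt (|Real.tan s|/s))
      = ∫ s in Ioc (π/2 : ℝ) π, Real.exp (-s*t) * Real.sqrt (|Real.tan s|/s) := by
    rw [show (2*((0:ℕ):ℝ)+1)*π/2 = π/2 by norm_num,
      show ((((0:ℕ):ℝ))+1)*π = π by norm_num]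
    exact intervalIntegral.integral_of_le (by linarith)
  have htail_rw : (∑' n : ℕ, ∫ s in ((2*(((n+1:ℕ)):ℝ)+1)*π/2)..(((n+1:ℕ):ℝ)+1)*π,
      Real.exp (-s*t) * Real.sqrt (|Real.tan s|/s))
      = ∑' n : ℕ, ∫ s in ((2*((n:ℝ)+1)+1)*π/2)..((((n:ℝ)+1)+1)*π),
      Real.exp (-s*t) * Real.sqrt (|Real.tan s|/s) := by
    apply tsum_congr
    intro n
    rw [show (((n+1:ℕ)):ℝ) = (n:ℝ)+1 by push_cast; ring]
  rw [h0eq, htail_rw]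
  have hmain := main_est ht
  have htail := tail_est ht
  have htail0 : 0 ≤ ∑' n : ℕ, ∫ s in ((2*((n:ℝ)+1)+1)*π/2)..((((n:ℝ)+1)+1)*π),
      Real.exp (-s*t) * Real.sqrt (|Real.tan s|/s) := by
    apply tsum_nonneg
    intro n
    have h := branch_nonneg' (n+1) t
    push_cast at h
    exact h
  set A := ∫ s in Ioc (π/2 : ℝ) π, Real.exp (-s*t) * Real.sqrt (|Real.tan s|/s)
  set B := ∑' n : ℕ, ∫ s in ((2*((n:ℝ)+1)+1)*π/2)..((((n:ℝ)+1)+1)*π),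
      Real.exp (-s*t) * Real.sqrt (|Real.tan s|/s)
  set M := Real.sqrt 2 * Real.exp (-(π/2)*t) / Real.sqrt t
  calc |A + B - M| = |(A - M) + B| := by ring_nf
    _ ≤ |A - M| + |B| := abs_add_le _ _
    _ = |A - M| + B := by rw [abs_of_nonneg htail0]
    _ ≤ 30 * (Real.exp (-(π/2)*t) / (t*Real.sqrt t))
        + 42 * (Real.exp (-(π/2)*t) / (t*Real.sqrt t)) := add_le_add hmain htail
    _ = 72 * (Real.exp (-(π/2)*t) / (t*Real.sqrt t)) := by ring

end WhithamAux

noncomputable def whithamSeries (x : ℝ) : ℝ :=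
  (1/Real.pi) * ∑' n : ℕ, ∫ s in ((2*(n:ℝ)+1)*Real.pi/2)..(((n:ℝ)+1)*Real.pi),
    Real.exp (-s*|x|) * Real.sqrt (|Real.tan s|/s)

theorem whitham_kernel_asymptotics :
    Asymptotics.IsBigO (Filter.cocompact ℝ)
      (fun x : ℝ => whithamSeries x
        - Real.sqrt 2/(Real.pi*Real.sqrt |x|) * Real.exp (-Real.pi*|x|/2))
      (fun x : ℝ => |x| ^ (-(3:ℝ)/2) * Real.exp (-Real.pi*|x|/2)) := by
  have hπ := Real.pi_pos
  rw [Asymptotics.isBigO_iff]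
  refine ⟨24, ?_⟩
  have hev : {x : ℝ | 1 ≤ |x|} ∈ Filter.cocompact ℝ := by
    rw [Filter.mem_cocompact]
    refine ⟨Icc (-1) 1, isCompact_Icc, fun x hx => ?_⟩
    simp only [Set.mem_compl_iff, Set.mem_Icc, not_and_or, not_le] at hx
    simp only [Set.mem_setOf_eq]
    rcases hx with h | h
    · rw [abs_of_neg (by linarith)]; linarith
    · rw [abs_of_pos (by linarith)]; linarith
  filter_upwards [hev] with x hx
  set t := |x| with htdef
  have ht : (1:ℝ) ≤ t := hx
  have ht0 : (0:ℝ) < t := lt_of_lt_of_le one_pos ht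
  have key := WhithamAux.total_est ht
  have hexp_eq : Real.exp (-Real.pi*t/2) = Real.exp (-(Real.pi/2)*t) := by
    congr 1; ring
  have hrpow : t ^ (-(3:ℝ)/2) = 1/(t*Real.sqrt t) := by
    rw [show -(3:ℝ)/2 = -(3/2:ℝ) by norm_num, Real.rpow_neg ht0.le,
      show (3/2:ℝ) = 1 + 1/2 by norm_num, Real.rpow_add ht0, Real.rpow_one,
      ← Real.sqrt_eq_rpow, one_div]
  have hfx : whithamSeries x - Real.sqrt 2/(Real.pi*Real.sqrt t) * Real.exp (-Real.pi*t/2)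
      = (1/Real.pi) * ((∑' n : ℕ, ∫ s in ((2*(n:ℝ)+1)*Real.pi/2)..(((n:ℝ)+1)*Real.pi),
          Real.exp (-s*t) * Real.sqrt (|Real.tan s|/s))
        - Real.sqrt 2 * Real.exp (-(Real.pi/2)*t) / Real.sqrt t) := by
    rw [whithamSeries, hexp_eq, ← htdef]
    ring
  rw [Real.norm_eq_abs, Real.norm_eq_abs, hfx, abs_mul,
    abs_of_pos (by positivity : (0:ℝ) < 1/Real.pi)]
  have hg_abs : |t ^ (-(3:ℝ)/2) * Real.exp (-Real.pi*t/2)|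
      = Real.exp (-(Real.pi/2)*t) / (t*Real.sqrt t) := by
    rw [hexp_eq, hrpow, abs_of_pos (by positivity)]
    ring
  rw [hg_abs]
  have h3 : (3:ℝ) ≤ Real.pi := by nlinarith [Real.pi_gt_d6]
  have hXpos : (0:ℝ) < Real.exp (-(Real.pi/2)*t) / (t*Real.sqrt t) := by positivity
  calc (1/Real.pi) * |(∑' n : ℕ, ∫ s in ((2*(n:ℝ)+1)*Real.pi/2)..(((n:ℝ)+1)*Real.pi),
          Real.exp (-s*t) * Real.sqrt (|Real.tan s|/s))
        - Real.sqrt 2 * Real.exp (-(Real.pi/2)*t) / Real.sqrt t|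
      ≤ (1/Real.pi) * (72 * (Real.exp (-(Real.pi/2)*t) / (t*Real.sqrt t))) :=
        mul_le_mul_of_nonneg_left key (by positivity)
    _ ≤ 24 * (Real.exp (-(Real.pi/2)*t) / (t*Real.sqrt t)) := by
        rw [div_mul_eq_mul_div, one_mul, div_le_iff₀ hπ]
        nlinarith
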